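/- Let ‖·‖ be a norm on ℝ², and let e₁, e₂ be a ℤ-basis of ℤ² with ‖e₁‖ ≤ ‖e₂‖ ≤ ‖v‖ for every v ∈ ℤ² with v ∉ {0, e₁, −e₁}. Then for every t > 0 and every integer N ≥ 1, the family (m,n) ↦ exp(−t·‖m·e₁ + n·e₂‖), indexed by pairs (m,n) ∈ ℤ² with |n| ≥ N, is summable, and its sum is at most 4·exp(−t·N·‖e₂‖/4) / ( (1 − exp(−t·‖e₁‖/4))·(1 − exp(−t·‖e₂‖/4)) ). -/
import Mathlib


open Real

/-- Geometric-series bound: with `e₁, e₂` the two shortest integer vectors forming a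
ℤ-basis of `ℤ²` for a norm `N` on `ℝ²`, for every `t > 0` and integer `N₀ ≥ 1` the family
`(m,n) ↦ exp(−t·N(m·e₁+n·e₂))` over pairs with `|n| ≥ N₀` is summable, with sum at most
`4·exp(−t·N₀·N e₂/4) / ((1 − exp(−t·N e₁/4))·(1 − exp(−t·N e₂/4)))`. -/
private lemma aux_not_span (w : ℤ × ℤ) (c d : ℤ)
    (h1 : ((1 : ℤ), (0 : ℤ)) = c • w) (h2 : ((0 : ℤ), (1 : ℤ)) = d • w) : False := by
  rw [Prod.ext_iff] at h1 h2
  obtain ⟨e1, e2⟩ := h1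
  obtain ⟨e3, e4⟩ := h2
  simp only [Prod.smul_fst, Prod.smul_snd, smul_eq_mul] at e1 e2 e3 e4
  have : (1 : ℤ) = 0 := by
    calc (1:ℤ) = (c * w.1) * (d * w.2) := by rw [← e1, ← e4]; ring
    _ = (c * w.2) * (d * w.1) := by ring
    _ = 0 := by rw [← e2, ← e3]; ring
  exact one_ne_zero this

section
variable {N : ℝ × ℝ → ℝ}

private lemma aux_neg (N_smul : ∀ (c : ℝ) v, N (c • v) = |c| * N v) (v : ℝ × ℝ) :
    N (-v) = N v := by
  have h := N_smul (-1) v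
  simpa using h

private lemma aux_nonneg (N_add : ∀ v w, N (v + w) ≤ N v + N w)
    (N_smul : ∀ (c : ℝ) v, N (c • v) = |c| * N v) (v : ℝ × ℝ) : 0 ≤ N v := by
  have h0 : N 0 = 0 := by
    have h := N_smul 0 0
    simpa using h
  have h := N_add v (-v)
  rw [add_neg_cancel, h0, aux_neg N_smul] at h
  linarith

private lemma aux_tri (N_add : ∀ v w, N (v + w) ≤ N v + N w) (u w : ℝ × ℝ) :
    N u ≤ N w + N (u - w) := by
  have h := N_add w (u - w)
  have he : w + (u - w) = u := by abel
  rwa [he] at h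

private lemma key0 (N_add : ∀ v w, N (v + w) ≤ N v + N w)
    (N_smul : ∀ (c : ℝ) v, N (c • v) = |c| * N v) (m n : ℕ) (A B : ℝ × ℝ)
    (hAB : N A ≤ N B) (hS : N B ≤ N (A + B)) :
    (m : ℝ) * N A + (n : ℝ) * N B ≤ 4 * N ((m : ℝ) • A + (n : ℝ) • B) := by
  set v : ℝ × ℝ := (m : ℝ) • A + (n : ℝ) • B with hv
  have hX : 0 ≤ N v := aux_nonneg N_add N_smul v
  have hA0 : 0 ≤ N A := aux_nonneg N_add N_smul A
  have hB0 : 0 ≤ N B := aux_nonneg N_add N_smul B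
  have hsm : ∀ (k : ℕ) (w : ℝ × ℝ), N ((k : ℝ) • w) = (k : ℝ) * N w := by
    intro k w; rw [N_smul, abs_of_nonneg (by positivity)]
  have t1 : (n : ℝ) * N B ≤ N v + (m : ℝ) * N A := by
    have h := aux_tri N_add ((n : ℝ) • B) v
    have he : (n : ℝ) • B - v = -((m : ℝ) • A) := by rw [hv]; abel
    rw [he, aux_neg N_smul, hsm, hsm] at h
    linarith
  have t4 : (m : ℝ) * N A ≤ N v + (n : ℝ) * N B := by
    have h := aux_tri N_add ((m : ℝ) • A) v
    have he : (m : ℝ) • A - v = -((n : ℝ) • B) := by rw [hv]; abel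
    rw [he, aux_neg N_smul, hsm, hsm] at h
    linarith
  by_cases hmn : m ≤ n
  · have hmn' : (m : ℝ) ≤ (n : ℝ) := by exact_mod_cast hmn
    have t2 : (n : ℝ) * N B ≤ N v + ((n : ℝ) - m) * N A := by
      have h := aux_tri N_add ((n : ℝ) • (A + B)) v
      have he : (n : ℝ) • (A + B) - v = ((n : ℝ) - (m : ℝ)) • A := by
        rw [hv, smul_add, sub_smul]; abel
      rw [he, hsm] at h
      rw [N_smul, abs_of_nonneg (by linarith : (0:ℝ) ≤ (n:ℝ) - (m:ℝ))] at h
      have h1 : (n : ℝ) * N B ≤ (n : ℝ) * N (A + B) :=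
        mul_le_mul_of_nonneg_left hS (by positivity)
      linarith
    have hc1 : (m : ℝ) * N A ≤ (n : ℝ) * N A := mul_le_mul_of_nonneg_right hmn' hA0
    have hc2 : (n : ℝ) * N A ≤ (n : ℝ) * N B := mul_le_mul_of_nonneg_left hAB (by positivity)
    linarith
  · push_neg at hmn
    have hmn' : (n : ℝ) ≤ (m : ℝ) := by exact_mod_cast hmn.le
    have t3 : (n : ℝ) * N B ≤ N v := by
      have h := aux_tri N_add ((m : ℝ) • (A + B)) v
      have he : (m : ℝ) • (A + B) - v = ((m : ℝ) - (n : ℝ)) • B := by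
        rw [hv, smul_add, sub_smul]; abel
      rw [he, hsm] at h
      rw [N_smul, abs_of_nonneg (by linarith : (0:ℝ) ≤ (m:ℝ) - (n:ℝ))] at h
      have h1 : (m : ℝ) * N B ≤ (m : ℝ) * N (A + B) :=
        mul_le_mul_of_nonneg_left hS (by positivity)
      linarith
    linarith
end

theorem summable_exp_neg_norm_lattice
    (N : ℝ × ℝ → ℝ)
    (N_add : ∀ v w, N (v + w) ≤ N v + N w)
    (N_smul : ∀ (c : ℝ) v, N (c • v) = |c| * N v)
    (N_eq_zero : ∀ v, N v = 0 ↔ v = 0)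
    (e₁ e₂ : ℤ × ℤ)
    (hbasis : ∀ v : ℤ × ℤ, ∃ m n : ℤ, v = m • e₁ + n • e₂)
    (E₁ E₂ : ℝ × ℝ)
    (hE₁ : E₁ = ((e₁.1 : ℝ), (e₁.2 : ℝ))) (hE₂ : E₂ = ((e₂.1 : ℝ), (e₂.2 : ℝ)))
    (h₁₂ : N E₁ ≤ N E₂)
    (h₂ : ∀ v : ℤ × ℤ, v ≠ 0 → v ≠ e₁ → v ≠ -e₁ →
      N E₂ ≤ N ((v.1 : ℝ), (v.2 : ℝ)))
    (t : ℝ) (ht : 0 < t) (N₀ : ℤ) (hN₀ : 1 ≤ N₀) :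
    Summable (fun p : {p : ℤ × ℤ // N₀ ≤ |p.2|} =>
        Real.exp (-t * N ((p.1.1 : ℝ) • E₁ + (p.1.2 : ℝ) • E₂)))
    ∧ (∑' p : {p : ℤ × ℤ // N₀ ≤ |p.2|},
          Real.exp (-t * N ((p.1.1 : ℝ) • E₁ + (p.1.2 : ℝ) • E₂)))
        ≤ 4 * Real.exp (-t * (N₀ : ℝ) * N E₂ / 4)
          / ((1 - Real.exp (-t * N E₁ / 4)) * (1 - Real.exp (-t * N E₂ / 4))) := by
  have hNneg : ∀ v, 0 ≤ N v := aux_nonneg N_add N_smul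
  have hk : ∀ k : ℤ, e₂ ≠ k • e₁ := by
    intro k h
    obtain ⟨m₁, n₁, h1⟩ := hbasis (1, 0)
    obtain ⟨m₂, n₂, h2'⟩ := hbasis (0, 1)
    rw [h, smul_smul, ← add_smul] at h1 h2'
    exact aux_not_span e₁ _ _ h1 h2'
  have he₁0 : e₁ ≠ 0 := by
    intro h
    obtain ⟨m₁, n₁, h1⟩ := hbasis (1, 0)
    obtain ⟨m₂, n₂, h2'⟩ := hbasis (0, 1)
    rw [h, smul_zero, zero_add] at h1 h2'
    exact aux_not_span e₂ _ _ h1 h2'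
  have hE₁0 : E₁ ≠ 0 := by
    rw [hE₁]
    intro h
    apply he₁0
    rw [Prod.ext_iff] at h ⊢
    simp only [Prod.fst_zero, Prod.snd_zero] at h ⊢
    exact ⟨by exact_mod_cast h.1, by exact_mod_cast h.2⟩
  have ha : 0 < N E₁ := lt_of_le_of_ne (hNneg E₁)
    (fun h => hE₁0 ((N_eq_zero E₁).mp h.symm))
  have hb : 0 < N E₂ := lt_of_lt_of_le ha h₁₂
  -- N E₂ ≤ N (E₁ + E₂)
  have hP : N E₂ ≤ N (E₁ + E₂) := by
    have hcast : (((e₁ + e₂).1 : ℝ), ((e₁ + e₂).2 : ℝ)) = E₁ + E₂ := by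
      rw [hE₁, hE₂, Prod.ext_iff]
      simp only [Prod.fst_add, Prod.snd_add]
      constructor <;> push_cast <;> ring
    have hne1 : e₁ + e₂ ≠ 0 := by
      intro h0
      apply hk (-1)
      rw [Prod.ext_iff] at h0 ⊢
      simp only [Prod.fst_add, Prod.snd_add, Prod.fst_zero, Prod.snd_zero,
        Prod.smul_fst, Prod.smul_snd, smul_eq_mul] at h0 ⊢
      omega
    have hne2 : e₁ + e₂ ≠ e₁ := by
      intro h0
      apply hk 0
      rw [Prod.ext_iff] at h0 ⊢
      simp only [Prod.fst_add, Prod.snd_add, Prod.smul_fst, Prod.smul_snd,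
        smul_eq_mul] at h0 ⊢
      omega
    have hne3 : e₁ + e₂ ≠ -e₁ := by
      intro h0
      apply hk (-2)
      rw [Prod.ext_iff] at h0 ⊢
      simp only [Prod.fst_add, Prod.snd_add, Prod.fst_neg, Prod.snd_neg,
        Prod.smul_fst, Prod.smul_snd, smul_eq_mul] at h0 ⊢
      omega
    have h := h₂ (e₁ + e₂) hne1 hne2 hne3
    rwa [hcast] at h
  have hM : N E₂ ≤ N (-E₁ + E₂) := by
    have hcast : (((e₂ - e₁).1 : ℝ), ((e₂ - e₁).2 : ℝ)) = -E₁ + E₂ := by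
      rw [hE₁, hE₂, Prod.ext_iff]
      simp only [Prod.fst_sub, Prod.snd_sub, Prod.fst_add, Prod.snd_add,
        Prod.fst_neg, Prod.snd_neg]
      constructor <;> push_cast <;> ring
    have hne1 : e₂ - e₁ ≠ 0 := by
      intro h0
      apply hk 1
      rw [Prod.ext_iff] at h0 ⊢
      simp only [Prod.fst_sub, Prod.snd_sub, Prod.fst_zero, Prod.snd_zero,
        Prod.smul_fst, Prod.smul_snd, smul_eq_mul] at h0 ⊢
      omega
    have hne2 : e₂ - e₁ ≠ e₁ := by
      intro h0
      apply hk 2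
      rw [Prod.ext_iff] at h0 ⊢
      simp only [Prod.fst_sub, Prod.snd_sub, Prod.smul_fst, Prod.smul_snd,
        smul_eq_mul] at h0 ⊢
      omega
    have hne3 : e₂ - e₁ ≠ -e₁ := by
      intro h0
      apply hk 0
      rw [Prod.ext_iff] at h0 ⊢
      simp only [Prod.fst_sub, Prod.snd_sub, Prod.fst_neg, Prod.snd_neg,
        Prod.smul_fst, Prod.smul_snd, smul_eq_mul] at h0 ⊢
      omega
    have h := h₂ (e₂ - e₁) hne1 hne2 hne3
    rwa [hcast] at h
  -- key inequality
  have keyPos : ∀ m n : ℤ, 0 < n →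
      (m.natAbs : ℝ) * N E₁ + (n.natAbs : ℝ) * N E₂ ≤
        4 * N ((m : ℝ) • E₁ + (n : ℝ) • E₂) := by
    intro m n hn
    rcases le_or_gt 0 m with hm | hm
    · have h := key0 N_add N_smul m.toNat n.toNat E₁ E₂ h₁₂ hP
      have c1 : ((m.toNat : ℕ) : ℝ) = (m : ℝ) := by
        rw [← Int.cast_natCast, Int.toNat_of_nonneg hm]
      have c2 : ((n.toNat : ℕ) : ℝ) = (n : ℝ) := by
        rw [← Int.cast_natCast, Int.toNat_of_nonneg hn.le]
      have c3 : ((m.natAbs : ℕ) : ℝ) = (m : ℝ) := by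
        rw [← Int.cast_natCast, Int.natAbs_of_nonneg hm]
      have c4 : ((n.natAbs : ℕ) : ℝ) = (n : ℝ) := by
        rw [← Int.cast_natCast, Int.natAbs_of_nonneg hn.le]
      rw [c1, c2] at h
      rw [c3, c4]
      exact h
    · have hAB' : N (-E₁) ≤ N E₂ := by rw [aux_neg N_smul]; exact h₁₂
      have h := key0 N_add N_smul (-m).toNat n.toNat (-E₁) E₂ hAB' hM
      have c1 : (((-m).toNat : ℕ) : ℝ) = -(m : ℝ) := by
        rw [← Int.cast_natCast, Int.toNat_of_nonneg (by omega : (0:ℤ) ≤ -m)]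
        push_cast; ring
      have c2 : ((n.toNat : ℕ) : ℝ) = (n : ℝ) := by
        rw [← Int.cast_natCast, Int.toNat_of_nonneg hn.le]
      have c3 : ((m.natAbs : ℕ) : ℝ) = -(m : ℝ) := by
        rw [← Int.cast_natCast]
        rw [show ((m.natAbs : ℤ)) = -m by omega]
        push_cast; ring
      have c4 : ((n.natAbs : ℕ) : ℝ) = (n : ℝ) := by
        rw [← Int.cast_natCast, Int.natAbs_of_nonneg hn.le]
      rw [c1, c2] at h
      rw [aux_neg N_smul] at h
      have hv : (-(m:ℝ)) • -E₁ + (n:ℝ) • E₂ = (m : ℝ) • E₁ + (n : ℝ) • E₂ := by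
        rw [smul_neg, neg_smul, neg_neg]
      rw [hv] at h
      rw [c3, c4]
      exact h
  have key : ∀ m n : ℤ, n ≠ 0 →
      (m.natAbs : ℝ) * N E₁ + (n.natAbs : ℝ) * N E₂ ≤
        4 * N ((m : ℝ) • E₁ + (n : ℝ) • E₂) := by
    intro m n hn
    rcases lt_or_gt_of_ne hn with h | h
    · have h2' := keyPos (-m) (-n) (by omega)
      rw [show ((-m : ℤ) : ℝ) = -(m:ℝ) by push_cast; ring,
        show ((-n : ℤ) : ℝ) = -(n:ℝ) by push_cast; ring] at h2'
      rw [show (-(m:ℝ)) • E₁ + (-(n:ℝ)) • E₂ = -((m:ℝ) • E₁ + (n:ℝ) • E₂) by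
        rw [neg_smul, neg_smul]; abel] at h2'
      rw [aux_neg N_smul] at h2'
      simpa [Int.natAbs_neg] using h2'
    · exact keyPos m n h

  -- abbreviations
  set r := Real.exp (-t * N E₁ / 4) with hrdef
  set s := Real.exp (-t * N E₂ / 4) with hsdef
  have hr0 : 0 < r := Real.exp_pos _
  have hs0 : 0 < s := Real.exp_pos _
  have hr1 : r < 1 := by
    rw [hrdef, Real.exp_lt_one_iff]
    nlinarith
  have hs1 : s < 1 := by
    rw [hsdef, Real.exp_lt_one_iff]
    nlinarith
  set c := s ^ N₀.toNat with hcdef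
  have hc0 : 0 < c := pow_pos hs0 _
  set g : ℤ → ℝ := fun k => if 0 ≤ k then s ^ k.toNat else s ^ (-k - 1).toNat with hgdef
  set H : ℤ × ℤ → ℝ := fun q => c * (r ^ q.1.natAbs * g q.2) with hHdef
  set Φ : {p : ℤ × ℤ // N₀ ≤ |p.2|} → ℤ × ℤ :=
    fun p => (p.1.1, if 0 ≤ p.1.2 then p.1.2 - N₀ else p.1.2 + N₀ - 1) with hΦdef
  -- HasSum facts
  have Hg : HasSum g ((1 - s)⁻¹ + (1 - s)⁻¹) := by
    apply HasSum.of_nat_of_neg_add_one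
    · have hfun : (fun k : ℕ => g ((k : ℤ))) = fun k : ℕ => s ^ k := by
        funext k
        rw [hgdef]
        dsimp only
        rw [if_pos (by omega : (0:ℤ) ≤ (k:ℤ))]
        congr 1 <;> omega
      rw [hfun]
      exact hasSum_geometric_of_lt_one hs0.le hs1
    · have hfun : (fun k : ℕ => g (-((k:ℤ) + 1))) = fun k : ℕ => s ^ k := by
        funext k
        rw [hgdef]
        dsimp only
        rw [if_neg (by omega : ¬ (0:ℤ) ≤ -((k:ℤ) + 1))]
        congr 1 <;> omega
      rw [hfun]
      exact hasSum_geometric_of_lt_one hs0.le hs1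
  have Hr : HasSum (fun m : ℤ => r ^ m.natAbs) ((1 - r)⁻¹ + r * (1 - r)⁻¹) := by
    apply HasSum.of_nat_of_neg_add_one
    · have hfun : (fun k : ℕ => r ^ ((k : ℤ)).natAbs) = fun k : ℕ => r ^ k := by
        funext k
        congr 1 <;> omega
      rw [hfun]
      exact hasSum_geometric_of_lt_one hr0.le hr1
    · have hfun : (fun k : ℕ => r ^ (-((k:ℤ) + 1)).natAbs) = fun k : ℕ => r * r ^ k := by
        funext k
        rw [show (-((k:ℤ) + 1)).natAbs = k + 1 by omega, pow_succ]
        ring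
      rw [hfun]
      exact (hasSum_geometric_of_lt_one hr0.le hr1).mul_left r
  have hgnn : ∀ k, 0 ≤ g k := by
    intro k
    rw [hgdef]
    dsimp only
    split <;> positivity
  have Hrg : HasSum (fun q : ℤ × ℤ => r ^ q.1.natAbs * g q.2)
      (((1 - r)⁻¹ + r * (1 - r)⁻¹) * ((1 - s)⁻¹ + (1 - s)⁻¹)) := by
    have h1 : (0 : ℤ → ℝ) ≤ fun m : ℤ => r ^ m.natAbs := fun m => pow_nonneg hr0.le _
    have hsum := Summable.mul_of_nonneg (f := fun m : ℤ => r ^ m.natAbs) (g := g)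
      Hr.summable Hg.summable h1 hgnn
    exact HasSum.mul (f := fun m : ℤ => r ^ m.natAbs) (g := g) Hr Hg hsum
  have HH : HasSum H (c * (((1 - r)⁻¹ + r * (1 - r)⁻¹) * ((1 - s)⁻¹ + (1 - s)⁻¹))) :=
    Hrg.mul_left c
  have hHnn : ∀ q, 0 ≤ H q := by
    intro q
    rw [hHdef]
    dsimp only
    have := hgnn q.2
    positivity
  -- injectivity
  have hΦinj : Function.Injective Φ := by
    rintro ⟨⟨m1, n1⟩, hp⟩ ⟨⟨m2, n2⟩, hq⟩ hpq
    simp only [hΦdef, Prod.mk.injEq] at hpq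
    have hp' : N₀ ≤ |n1| := hp
    have hq' : N₀ ≤ |n2| := hq
    rw [Int.abs_eq_natAbs] at hp' hq'
    apply Subtype.ext
    obtain ⟨h1, h2⟩ := hpq
    refine Prod.ext h1 ?_
    simp only
    split_ifs at h2 <;> omega
  -- pointwise bound
  have hbound : ∀ p : {p : ℤ × ℤ // N₀ ≤ |p.2|},
      Real.exp (-t * N ((p.1.1 : ℝ) • E₁ + (p.1.2 : ℝ) • E₂)) ≤ H (Φ p) := by
    rintro ⟨⟨m, n⟩, hp⟩
    have hp' : N₀ ≤ |n| := hp
    rw [Int.abs_eq_natAbs] at hp'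
    have hn : n ≠ 0 := by omega
    have hkey := key m n hn
    have step1 : Real.exp (-t * N ((m : ℝ) • E₁ + (n : ℝ) • E₂)) ≤
        r ^ m.natAbs * s ^ n.natAbs := by
      rw [hrdef, hsdef, ← Real.exp_nat_mul, ← Real.exp_nat_mul, ← Real.exp_add]
      apply Real.exp_le_exp.mpr
      have hNv : 0 ≤ N ((m : ℝ) • E₁ + (n : ℝ) • E₂) := hNneg _
      nlinarith [mul_le_mul_of_nonneg_left hkey ht.le]
    have step2 : r ^ m.natAbs * s ^ n.natAbs = H (Φ ⟨(m, n), hp⟩) := by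
      rw [hHdef, hΦdef, hgdef]
      simp only
      rcases le_or_gt 0 n with h | h
      · have h1 : (0:ℤ) ≤ n - N₀ := by omega
        rw [if_pos h, if_pos h1, hcdef, ← mul_assoc, mul_comm (s ^ N₀.toNat),
          mul_assoc, ← pow_add]
        congr 2
        omega
      · have h1 : ¬ (0:ℤ) ≤ n := by omega
        have h2 : ¬ (0:ℤ) ≤ n + N₀ - 1 := by omega
        rw [if_neg h1, if_neg h2, hcdef, ← mul_assoc, mul_comm (s ^ N₀.toNat),
          mul_assoc, ← pow_add]
        congr 2
        omega
    calc Real.exp (-t * N ((m : ℝ) • E₁ + (n : ℝ) • E₂))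
        ≤ r ^ m.natAbs * s ^ n.natAbs := step1
      _ = H (Φ ⟨(m, n), hp⟩) := step2
  -- summability
  have hcomp : Summable (H ∘ Φ) := HH.summable.comp_injective hΦinj
  have hfsum : Summable (fun p : {p : ℤ × ℤ // N₀ ≤ |p.2|} =>
      Real.exp (-t * N ((p.1.1 : ℝ) • E₁ + (p.1.2 : ℝ) • E₂))) := by
    apply Summable.of_nonneg_of_le (fun p => (Real.exp_pos _).le) hbound hcomp
  refine ⟨hfsum, ?_⟩
  have hle := hasSum_le_inj Φ hΦinj (fun q _ => hHnn q) hbound hfsum.hasSum HH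
  refine hle.trans ?_
  -- final arithmetic
  have h1r : 0 < 1 - r := by linarith
  have h1s : 0 < 1 - s := by linarith
  have hc : c = Real.exp (-t * (N₀ : ℝ) * N E₂ / 4) := by
    rw [hcdef, hsdef, ← Real.exp_nat_mul]
    congr 1
    have hN : ((N₀.toNat : ℕ) : ℝ) = (N₀ : ℝ) := by
      rw [← Int.cast_natCast, Int.toNat_of_nonneg (by omega)]
    rw [hN]
    ring
  rw [← hc]
  have hA : (1 - r)⁻¹ + r * (1 - r)⁻¹ ≤ 2 * (1 - r)⁻¹ := by
    have hi : 0 < (1 - r)⁻¹ := inv_pos.mpr h1r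
    nlinarith
  have hB : (1 - s)⁻¹ + (1 - s)⁻¹ ≤ 2 * (1 - s)⁻¹ := by linarith
  have hA0 : 0 ≤ (1 - r)⁻¹ + r * (1 - r)⁻¹ := by positivity
  have hB0 : 0 ≤ (1 - s)⁻¹ + (1 - s)⁻¹ := by positivity
  have hfin : c * (((1 - r)⁻¹ + r * (1 - r)⁻¹) * ((1 - s)⁻¹ + (1 - s)⁻¹)) ≤
      c * ((2 * (1 - r)⁻¹) * (2 * (1 - s)⁻¹)) := by
    apply mul_le_mul_of_nonneg_left _ hc0.le
    apply mul_le_mul hA hB hB0 (by positivity)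
  refine hfin.trans ?_
  rw [div_eq_mul_inv, mul_inv]
  ring_nf
  nlinarith [inv_pos.mpr h1r, inv_pos.mpr h1s, hc0]
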